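/- Let F : [0,∞) → ℝ be a cumulative distribution function of a nonnegative random variable (F nondecreasing, F(0) = 0, F(t) → 1 as t → ∞), continuously differentiable on [0,∞), satisfying the renewal equation F(t) = 2t/(1+t)³ + ∫₀ᵗ 2/(1+(t−y))³ · F(y) dy for all t ≥ 0. Then ∫₀ᵗ u(1−F(u)) du ~ t as t → ∞, i.e. (∫₀ᵗ u(1−F(u)) du)/t → 1 as t → ∞. -/

import Mathlib

open MeasureTheory Filter Set


lemma swap_triangle (f : ℝ → ℝ → ℝ) (hf : Continuous (Function.uncurry f)) (T : ℝ) (hT : 0 ≤ T) :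
    (∫ t in (0:ℝ)..T, ∫ y in (0:ℝ)..t, f t y) = ∫ y in (0:ℝ)..T, ∫ t in y..T, f t y := by
  have hS : MeasurableSet {p : ℝ × ℝ | p.2 ≤ p.1} :=
    (isClosed_le continuous_snd continuous_fst).measurableSet
  set g : ℝ → ℝ → ℝ := fun t y => if y ≤ t then f t y else 0 with hg
  have hgm : Measurable (Function.uncurry g) := by
    apply Measurable.ite hS hf.measurable measurable_const
  -- bound
  obtain ⟨M, hM⟩ : ∃ M, ∀ p ∈ Icc (0:ℝ) T ×ˢ Icc (0:ℝ) T, |Function.uncurry f p| ≤ M := by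
    obtain ⟨M, hM⟩ := (isCompact_Icc.prod isCompact_Icc).exists_bound_of_continuousOn
      hf.continuousOn
    exact ⟨M, fun p hp => by simpa using hM p hp⟩
  set μ : Measure ℝ := volume.restrict (Ioc 0 T) with hμ
  have hfin : IsFiniteMeasure μ := ⟨by simp [hμ, Measure.restrict_apply_univ]⟩
  have hint : Integrable (Function.uncurry g) (μ.prod μ) := by
    have h1 : AEStronglyMeasurable (Function.uncurry g) (μ.prod μ) :=
      hgm.aestronglyMeasurable
    refine ⟨h1, ?_⟩
    have : ∀ᵐ p ∂(μ.prod μ), p ∈ Ioc (0:ℝ) T ×ˢ Ioc (0:ℝ) T := by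
      rw [hμ, Measure.prod_restrict]
      exact ae_restrict_mem (measurableSet_Ioc.prod measurableSet_Ioc)
    apply HasFiniteIntegral.mono' (g := fun _ => max M 0)
      (integrable_const (max M 0)).hasFiniteIntegral
    filter_upwards [this] with p hp
    rw [mem_prod] at hp
    by_cases h : p.2 ≤ p.1
    · have hb := hM p ⟨Ioc_subset_Icc_self hp.1, Ioc_subset_Icc_self hp.2⟩
      calc ‖Function.uncurry g p‖ = |Function.uncurry f p| := by
            simp [Function.uncurry, g, h, Real.norm_eq_abs]
        _ ≤ M := hb
        _ ≤ max M 0 := le_max_left _ _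
    · simp [Function.uncurry, g, h, Real.norm_eq_abs, le_max_iff]
  have hswap := integral_integral_swap (μ := μ) (ν := μ) (f := g) hint
  have hL : (∫ t, ∫ y, g t y ∂μ ∂μ) = ∫ t in (0:ℝ)..T, ∫ y in (0:ℝ)..t, f t y := by
    rw [intervalIntegral.integral_of_le hT]
    apply setIntegral_congr_ae measurableSet_Ioc
    filter_upwards with t ht
    have h1 : ∀ y, g t y = (Iic t).indicator (f t) y := by
      intro y; simp [g, indicator_apply, mem_Iic]
    simp_rw [h1]
    rw [hμ, setIntegral_indicator measurableSet_Iic, Ioc_inter_Iic,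
      min_eq_right ht.2, intervalIntegral.integral_of_le ht.1.le]
  have hR : (∫ y, ∫ t, g t y ∂μ ∂μ) = ∫ y in (0:ℝ)..T, ∫ t in y..T, f t y := by
    rw [intervalIntegral.integral_of_le hT]
    apply setIntegral_congr_ae measurableSet_Ioc
    filter_upwards with y hy
    have h1 : ∀ t, g t y = (Ici y).indicator (fun t => f t y) t := by
      intro t; simp [g, indicator_apply, mem_Ici]
    simp_rw [h1]
    rw [hμ, setIntegral_indicator measurableSet_Ici]
    have h2 : Ioc 0 T ∩ Ici y = Icc y T := by
      ext p
      simp only [mem_inter_iff, mem_Ioc, mem_Ici, mem_Icc]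
      constructor
      · rintro ⟨⟨_, h1⟩, h2⟩; exact ⟨h2, h1⟩
      · rintro ⟨h1, h2⟩; exact ⟨⟨lt_of_lt_of_le hy.1 h1, h2⟩, h1⟩
    rw [h2, integral_Icc_eq_integral_Ioc, intervalIntegral.integral_of_le hy.2]
  rw [← hL, ← hR]; exact hswap

-- derivative helpers
lemma hd_pow3 (c t : ℝ) (h : (1:ℝ) + (t - c) ≠ 0) :
    HasDerivAt (fun t : ℝ => -((1 + (t - c)) ^ 2)⁻¹) (2 / (1 + (t - c)) ^ 3) t := by
  have h1 : HasDerivAt (fun t : ℝ => 1 + (t - c)) 1 t :=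
    ((hasDerivAt_id t).sub_const c).const_add 1
  have h2 := ((h1.pow 2).inv (pow_ne_zero 2 h)).neg
  refine h2.congr_deriv ?_
  simp only [Pi.pow_apply]
  field_simp
  ring

lemma hd_pow2 (T t : ℝ) (h : (1:ℝ) + (T - t) ≠ 0) :
    HasDerivAt (fun y : ℝ => (1 + (T - y))⁻¹) (1 / (1 + (T - t)) ^ 2) t := by
  have h1 : HasDerivAt (fun y : ℝ => 1 + (T - y)) (-1) t := by
    simpa using ((hasDerivAt_const t T).sub (hasDerivAt_id t)).const_add 1
  have h2 := h1.inv h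
  refine h2.congr_deriv ?_
  field_simp

lemma hd_z (t : ℝ) (h : (1:ℝ) + t ≠ 0) :
    HasDerivAt (fun t : ℝ => ((1 + t) ^ 2)⁻¹ - 2 * (1 + t)⁻¹) (2 * t / (1 + t) ^ 3) t := by
  have h1 : HasDerivAt (fun t : ℝ => 1 + t) 1 t := (hasDerivAt_id t).const_add 1
  have h2 := ((h1.pow 2).inv (pow_ne_zero 2 h)).sub ((h1.inv h).const_mul 2)
  refine h2.congr_deriv ?_
  simp only [Pi.pow_apply]
  field_simp
  ring

lemma integral_z (s : ℝ) (hs : 0 ≤ s) :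
    ∫ t in (0:ℝ)..s, 2 * t / (1 + t) ^ 3 = 1 + ((1 + s) ^ 2)⁻¹ - 2 * (1 + s)⁻¹ := by
  have h : ∀ t ∈ uIcc (0:ℝ) s, (1:ℝ) + t ≠ 0 := by
    intro t ht
    rw [uIcc_of_le hs] at ht
    nlinarith [ht.1]
  rw [intervalIntegral.integral_eq_sub_of_hasDerivAt (f := fun t => ((1+t)^2)⁻¹ - 2*(1+t)⁻¹)
    (fun t ht => hd_z t (h t ht)) ?_]
  · norm_num; ring
  · apply ContinuousOn.intervalIntegrable
    apply ContinuousOn.div (by fun_prop)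
    · fun_prop
    · intro t ht
      exact pow_ne_zero 3 (h t ht)

lemma integral_ker (y T : ℝ) (h0 : 0 ≤ y) (hyT : y ≤ T) :
    ∫ t in y..T, 2 / (1 + (t - y)) ^ 3 = 1 - ((1 + (T - y)) ^ 2)⁻¹ := by
  have h : ∀ t ∈ uIcc y T, (1:ℝ) + (t - y) ≠ 0 := by
    intro t ht
    rw [uIcc_of_le hyT] at ht
    nlinarith [ht.1]
  rw [intervalIntegral.integral_eq_sub_of_hasDerivAt (f := fun t => -((1 + (t - y))^2)⁻¹)
    (fun t ht => hd_pow3 y t (h t ht)) ?_]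
  · norm_num; ring
  · apply ContinuousOn.intervalIntegrable
    apply ContinuousOn.div (by fun_prop) (by fun_prop)
    intro t ht
    exact pow_ne_zero 3 (h t ht)

lemma integral_ker2 (T : ℝ) (hT : 0 ≤ T) :
    ∫ y in (0:ℝ)..T, 1 / (1 + (T - y)) ^ 2 = 1 - (1 + T)⁻¹ := by
  have h : ∀ t ∈ uIcc (0:ℝ) T, (1:ℝ) + (T - t) ≠ 0 := by
    intro t ht
    rw [uIcc_of_le hT] at ht
    nlinarith [ht.2]
  rw [intervalIntegral.integral_eq_sub_of_hasDerivAt (f := fun t => (1 + (T - t))⁻¹)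
    (fun t ht => hd_pow2 T t (h t ht)) ?_]
  · norm_num
  · apply ContinuousOn.intervalIntegrable
    apply ContinuousOn.div (by fun_prop) (by fun_prop)
    intro t ht
    exact pow_ne_zero 2 (h t ht)

lemma star (F : ℝ → ℝ) (hFc : ContinuousOn F (Ici 0))
    (hrenewal : ∀ t, 0 ≤ t →
      F t = 2 * t / (1 + t) ^ 3 + ∫ y in (0:ℝ)..t, 2 / (1 + (t - y)) ^ 3 * F y)
    (T : ℝ) (hT : 0 ≤ T) :
    ∫ y in (0:ℝ)..T, (1 - F y) / (1 + (T - y)) ^ 2 = T / (1 + T) ^ 2 := by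
  set Fc : ℝ → ℝ := fun y => F (max y 0) with hFcdef
  have hFcc : Continuous Fc :=
    hFc.comp_continuous (continuous_id.max continuous_const) (fun x => le_max_right x 0)
  set K : ℝ → ℝ → ℝ := fun t y => 2 / (1 + |t - y|) ^ 3 * Fc y with hKdef
  have hK : Continuous (Function.uncurry K) := by
    apply Continuous.mul
    · apply Continuous.div continuous_const
      · fun_prop
      · intro p
        have : (0:ℝ) < 1 + |p.1 - p.2| := by positivity
        positivity
    · exact hFcc.comp continuous_snd
  have hswap := swap_triangle K hK T hT
  -- LHS of swap
  have hL2 : (∫ t in (0:ℝ)..T, ∫ y in (0:ℝ)..t, K t y)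
      = ∫ t in (0:ℝ)..T, (F t - 2 * t / (1 + t) ^ 3) := by
    apply intervalIntegral.integral_congr
    intro t ht
    rw [uIcc_of_le hT] at ht
    have hinner : (∫ y in (0:ℝ)..t, K t y) = ∫ y in (0:ℝ)..t, 2 / (1 + (t - y)) ^ 3 * F y := by
      apply intervalIntegral.integral_congr
      intro y hy
      rw [uIcc_of_le ht.1] at hy
      simp only [hKdef, hFcdef]
      rw [abs_of_nonneg (by linarith [hy.1, hy.2]), max_eq_left hy.1]
    show (∫ y in (0:ℝ)..t, K t y) = F t - 2 * t / (1 + t) ^ 3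
    rw [hinner]
    have := hrenewal t ht.1
    simp only [this]
    ring
  -- RHS of swap
  have hR2 : (∫ y in (0:ℝ)..T, ∫ t in y..T, K t y)
      = ∫ y in (0:ℝ)..T, (F y - F y * ((1 + (T - y)) ^ 2)⁻¹) := by
    apply intervalIntegral.integral_congr
    intro y hy
    rw [uIcc_of_le hT] at hy
    have hinner : (∫ t in y..T, K t y) = ∫ t in y..T, 2 / (1 + (t - y)) ^ 3 * F y := by
      apply intervalIntegral.integral_congr
      intro t ht
      rw [uIcc_of_le hy.2] at ht
      simp only [hKdef, hFcdef]
      rw [abs_of_nonneg (by linarith [ht.1]), max_eq_left hy.1]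
    show (∫ t in y..T, K t y) = F y - F y * ((1 + (T - y)) ^ 2)⁻¹
    rw [hinner, intervalIntegral.integral_mul_const, integral_ker y T hy.1 hy.2]
    ring
  rw [hL2, hR2] at hswap
  -- integrability facts on [0, T]
  have hne : ∀ y ∈ uIcc (0:ℝ) T, ((1:ℝ) + (T - y)) ^ 2 ≠ 0 := by
    intro y hy
    rw [uIcc_of_le hT] at hy
    exact pow_ne_zero 2 (by nlinarith [hy.2])
  have hFInt : IntervalIntegrable F volume 0 T := by
    apply ContinuousOn.intervalIntegrable
    apply hFc.mono
    rw [uIcc_of_le hT]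
    exact fun x hx => hx.1
  have hFker : IntervalIntegrable (fun y => F y * ((1 + (T - y)) ^ 2)⁻¹) volume 0 T := by
    apply ContinuousOn.intervalIntegrable
    apply ContinuousOn.mul
    · apply hFc.mono
      rw [uIcc_of_le hT]
      exact fun x hx => hx.1
    · exact ContinuousOn.inv₀ (by fun_prop) hne
  have hzInt : IntervalIntegrable (fun t => 2 * t / (1 + t) ^ 3) volume 0 T := by
    apply ContinuousOn.intervalIntegrable
    apply ContinuousOn.div (by fun_prop) (by fun_prop)
    intro t ht
    rw [uIcc_of_le hT] at ht
    exact pow_ne_zero 3 (by nlinarith [ht.1])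
  rw [intervalIntegral.integral_sub hFInt hzInt,
      intervalIntegral.integral_sub hFInt hFker, integral_z T hT] at hswap
  have key : (∫ y in (0:ℝ)..T, F y * ((1 + (T - y)) ^ 2)⁻¹)
      = 1 + ((1 + T) ^ 2)⁻¹ - 2 * (1 + T)⁻¹ := by linarith
  have hsplit : (∫ y in (0:ℝ)..T, (1 - F y) / (1 + (T - y)) ^ 2)
      = (∫ y in (0:ℝ)..T, 1 / (1 + (T - y)) ^ 2)
        - ∫ y in (0:ℝ)..T, F y * ((1 + (T - y)) ^ 2)⁻¹ := by
    rw [← intervalIntegral.integral_sub ?_ hFker]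
    · apply intervalIntegral.integral_congr
      intro y hy
      have := hne y hy
      field_simp
    · apply ContinuousOn.intervalIntegrable
      exact ContinuousOn.div (by fun_prop) (by fun_prop) hne
  rw [hsplit, key, integral_ker2 T hT]
  have h1 : (1:ℝ) + T ≠ 0 := by nlinarith
  field_simp
  ring

lemma integral_ker2' (a T : ℝ) (h : a ≤ T) :
    ∫ y in a..T, 1 / (1 + (T - y)) ^ 2 = 1 - (1 + (T - a))⁻¹ := by
  have hne : ∀ t ∈ uIcc a T, (1:ℝ) + (T - t) ≠ 0 := by
    intro t ht
    rw [uIcc_of_le h] at ht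
    nlinarith [ht.2]
  rw [intervalIntegral.integral_eq_sub_of_hasDerivAt (f := fun t => (1 + (T - t))⁻¹)
    (fun t ht => hd_pow2 T t (hne t ht)) ?_]
  · norm_num
  · apply ContinuousOn.intervalIntegrable
    apply ContinuousOn.div (by fun_prop) (by fun_prop)
    intro t ht
    exact pow_ne_zero 2 (hne t ht)

lemma ker_integrable (F : ℝ → ℝ) (hFc : ContinuousOn F (Ici 0)) (a T : ℝ)
    (ha : 0 ≤ a) (h : a ≤ T) :
    IntervalIntegrable (fun y => (1 - F y) / (1 + (T - y)) ^ 2) volume a T := by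
  apply ContinuousOn.intervalIntegrable
  apply ContinuousOn.div
  · apply ContinuousOn.sub continuousOn_const
    apply hFc.mono
    rw [uIcc_of_le h]
    exact fun x hx => le_trans ha hx.1
  · fun_prop
  · intro y hy
    rw [uIcc_of_le h] at hy
    exact pow_ne_zero 2 (by nlinarith [hy.2])

lemma upper_bound (F : ℝ → ℝ) (hFc : ContinuousOn F (Ici 0))
    (hmono : ∀ a b : ℝ, 0 ≤ a → a ≤ b → F a ≤ F b)
    (hstar : ∀ T, 0 ≤ T → ∫ y in (0:ℝ)..T, (1 - F y) / (1 + (T - y)) ^ 2 = T / (1 + T) ^ 2) :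
    ∀ t, 0 < t → 1 - F t ≤ (1 + t)⁻¹ := by
  intro t ht
  have key : (1 - F t) * (1 - (1 + t)⁻¹) ≤ t / (1 + t) ^ 2 := by
    rw [← hstar t ht.le]
    have h1 : (∫ y in (0:ℝ)..t, (1 - F t) * (1 / (1 + (t - y)) ^ 2))
        ≤ ∫ y in (0:ℝ)..t, (1 - F y) / (1 + (t - y)) ^ 2 := by
      apply intervalIntegral.integral_mono_on ht.le
      · apply IntervalIntegrable.const_mul
        apply ContinuousOn.intervalIntegrable
        apply ContinuousOn.div continuousOn_const (by fun_prop)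
        intro y hy
        rw [uIcc_of_le ht.le] at hy
        exact pow_ne_zero 2 (by nlinarith [hy.2])
      · exact ker_integrable F hFc 0 t le_rfl ht.le
      · intro y hy
        have hFy : F y ≤ F t := hmono y t hy.1 hy.2
        have hpos : (0:ℝ) < (1 + (t - y)) ^ 2 := by nlinarith [hy.2]
        rw [mul_one_div, div_le_div_iff₀ hpos hpos]
        nlinarith
    calc (1 - F t) * (1 - (1 + t)⁻¹)
        = ∫ y in (0:ℝ)..t, (1 - F t) * (1 / (1 + (t - y)) ^ 2) := by
          rw [intervalIntegral.integral_const_mul, integral_ker2' 0 t ht.le]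
          norm_num
      _ ≤ _ := h1
  have h2 : 1 - (1 + t)⁻¹ = t / (1 + t) := by
    field_simp
    ring
  rw [h2] at key
  have h3 : (0:ℝ) < 1 + t := by linarith
  rw [← mul_div_assoc, div_le_div_iff₀ h3 (by positivity)] at key
  rw [← one_div, le_div_iff₀ h3]
  nlinarith [mul_pos ht h3, sq_nonneg (1+t)]


lemma integral_E (t : ℝ) (ht : 1 ≤ t) :
    ∫ y in (0:ℝ)..(t-1), (1 + y)⁻¹ * (1 / (1 + (t - y)) ^ 2)
      = (Real.log t - Real.log 2 + Real.log (1 + t)) / (2 + t) ^ 2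
        + (1 / (2 + t)) * (1 / 2 - (1 + t)⁻¹) := by
  have ht1 : (0:ℝ) ≤ t - 1 := by linarith
  set Ψ : ℝ → ℝ := fun y =>
    (Real.log (1 + y) - Real.log (1 + (t - y))) / (2 + t) ^ 2
      + (1 / (2 + t)) * (1 + (t - y))⁻¹ with hΨ
  have hderiv : ∀ y ∈ uIcc (0:ℝ) (t - 1),
      HasDerivAt Ψ ((1 + y)⁻¹ * (1 / (1 + (t - y)) ^ 2)) y := by
    intro y hy
    rw [uIcc_of_le ht1] at hy
    have hy1 : (0:ℝ) < 1 + y := by linarith [hy.1]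
    have hy2 : (0:ℝ) < 1 + (t - y) := by linarith [hy.2]
    have d1 : HasDerivAt (fun y : ℝ => Real.log (1 + y)) (1 / (1 + y)) y := by
      have := ((hasDerivAt_id y).const_add 1).log hy1.ne'
      simpa using this
    have d2 : HasDerivAt (fun y : ℝ => Real.log (1 + (t - y))) ((-1) / (1 + (t - y))) y := by
      have hin : HasDerivAt (fun y : ℝ => 1 + (t - y)) (-1) y := by
        simpa using ((hasDerivAt_const y t).sub (hasDerivAt_id y)).const_add 1
      exact hin.log hy2.ne'
    have d3 := hd_pow2 t y hy2.ne'
    have := (((d1.sub d2).div_const ((2 + t) ^ 2)).add (d3.const_mul (1 / (2 + t))))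
    refine this.congr_deriv ?_
    have h2t : (2:ℝ) + t ≠ 0 := by linarith
    field_simp
    ring
  rw [intervalIntegral.integral_eq_sub_of_hasDerivAt hderiv ?_]
  · have h2 : (1:ℝ) + (t - (t - 1)) = 2 := by ring
    simp only [hΨ, h2, sub_zero, add_zero]
    rw [show (1:ℝ) + (t - 1) = t by ring, Real.log_one]
    ring
  · apply ContinuousOn.intervalIntegrable
    apply ContinuousOn.mul
    · apply ContinuousOn.inv₀ (by fun_prop)
      intro y hy
      rw [uIcc_of_le ht1] at hy
      nlinarith [hy.1]
    · apply ContinuousOn.div continuousOn_const (by fun_prop)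
      intro y hy
      rw [uIcc_of_le ht1] at hy
      exact pow_ne_zero 2 (by nlinarith [hy.2])

lemma ker_integrable' (F : ℝ → ℝ) (hFc : ContinuousOn F (Ici 0)) (a b T : ℝ)
    (ha : 0 ≤ a) (hab : a ≤ b) (hbT : b ≤ T) :
    IntervalIntegrable (fun y => (1 - F y) / (1 + (T - y)) ^ 2) volume a b := by
  apply ContinuousOn.intervalIntegrable
  apply ContinuousOn.div
  · apply ContinuousOn.sub continuousOn_const
    apply hFc.mono
    rw [uIcc_of_le hab]
    exact fun x hx => le_trans ha hx.1
  · fun_prop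
  · intro y hy
    rw [uIcc_of_le hab] at hy
    exact pow_ne_zero 2 (by nlinarith [hy.2])

lemma lower_bound (F : ℝ → ℝ) (hFc : ContinuousOn F (Ici 0))
    (hmono : ∀ a b : ℝ, 0 ≤ a → a ≤ b → F a ≤ F b)
    (hF0 : 0 ≤ F 0)
    (hupper : ∀ t, 0 < t → 1 - F t ≤ (1 + t)⁻¹)
    (hstar : ∀ T, 0 ≤ T → ∫ y in (0:ℝ)..T, (1 - F y) / (1 + (T - y)) ^ 2 = T / (1 + T) ^ 2) :
    ∀ t, 1 ≤ t →
      2 * t / (1 + t) ^ 2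
        - 2 * ((Real.log t - Real.log 2 + Real.log (1 + t)) / (2 + t) ^ 2
            + (1 / (2 + t)) * (1 / 2 - (1 + t)⁻¹))
      ≤ 1 - F (t - 1) := by
  intro t ht
  have ht0 : (0:ℝ) ≤ t := by linarith
  have ht1 : (0:ℝ) ≤ t - 1 := by linarith
  have hsplit : (∫ y in (0:ℝ)..t, (1 - F y) / (1 + (t - y)) ^ 2)
      = (∫ y in (0:ℝ)..(t-1), (1 - F y) / (1 + (t - y)) ^ 2)
        + ∫ y in (t-1)..t, (1 - F y) / (1 + (t - y)) ^ 2 := by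
    rw [intervalIntegral.integral_add_adjacent_intervals
      (ker_integrable' F hFc 0 (t-1) t le_rfl ht1 (by linarith))
      (ker_integrable' F hFc (t-1) t t ht1 (by linarith) le_rfl)]
  have hb1 : (∫ y in (0:ℝ)..(t-1), (1 - F y) / (1 + (t - y)) ^ 2)
      ≤ ∫ y in (0:ℝ)..(t-1), (1 + y)⁻¹ * (1 / (1 + (t - y)) ^ 2) := by
    apply intervalIntegral.integral_mono_on ht1
      (ker_integrable' F hFc 0 (t-1) t le_rfl ht1 (by linarith))
    · apply ContinuousOn.intervalIntegrable
      apply ContinuousOn.mul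
      · apply ContinuousOn.inv₀ (by fun_prop)
        intro y hy
        rw [uIcc_of_le ht1] at hy
        nlinarith [hy.1]
      · apply ContinuousOn.div continuousOn_const (by fun_prop)
        intro y hy
        rw [uIcc_of_le ht1] at hy
        exact pow_ne_zero 2 (by nlinarith [hy.2])
    · intro y hy
      have h1F : 1 - F y ≤ (1 + y)⁻¹ := by
        rcases eq_or_lt_of_le hy.1 with h | h
        · rw [← h]; norm_num; linarith
        · exact hupper y h
      have hpos : (0:ℝ) < (1 + (t - y)) ^ 2 := by nlinarith [hy.2]
      rw [mul_one_div, div_le_div_iff₀ hpos hpos]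
      nlinarith
  have hb2 : (∫ y in (t-1)..t, (1 - F y) / (1 + (t - y)) ^ 2)
      ≤ (1 - F (t-1)) * (1 / 2) := by
    have heq : (∫ y in (t-1)..t, (1 - F (t-1)) * (1 / (1 + (t - y)) ^ 2))
        = (1 - F (t-1)) * (1 / 2) := by
      rw [intervalIntegral.integral_const_mul, integral_ker2' (t-1) t (by linarith)]
      norm_num
    rw [← heq]
    apply intervalIntegral.integral_mono_on (by linarith)
      (ker_integrable' F hFc (t-1) t t ht1 (by linarith) le_rfl)
    · apply IntervalIntegrable.const_mul
      apply ContinuousOn.intervalIntegrable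
      apply ContinuousOn.div continuousOn_const (by fun_prop)
      intro y hy
      rw [uIcc_of_le (show t - 1 ≤ t by linarith)] at hy
      exact pow_ne_zero 2 (by nlinarith [hy.2])
    · intro y hy
      have h1F : 1 - F y ≤ 1 - F (t-1) := by
        have := hmono (t-1) y ht1 hy.1
        linarith
      have hpos : (0:ℝ) < (1 + (t - y)) ^ 2 := by nlinarith [hy.2]
      rw [mul_one_div, div_le_div_iff₀ hpos hpos]
      nlinarith
  have hkey := hstar t ht0
  rw [hsplit] at hkey
  have hE := integral_E t ht
  rw [show 2 * t / (1 + t) ^ 2 = 2 * (t / (1 + t) ^ 2) by ring]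
  linarith [hb1, hb2]

lemma aux_rat (a b : ℝ) (ha : 0 ≤ a) (hb : 0 ≤ b) :
    Tendsto (fun s : ℝ => s * (s + a) / (s + b) ^ 2) atTop (nhds 1) := by
  have hinv : Tendsto (fun s : ℝ => s⁻¹) atTop (nhds (0:ℝ)) := tendsto_inv_atTop_zero
  have hnum : Tendsto (fun s : ℝ => 1 + a * s⁻¹) atTop (nhds 1) := by
    simpa using (hinv.const_mul a).const_add 1
  have hden : Tendsto (fun s : ℝ => (1 + b * s⁻¹) ^ 2) atTop (nhds 1) := by
    simpa using ((hinv.const_mul b).const_add 1).pow 2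
  have h1 : Tendsto (fun s : ℝ => (1 + a * s⁻¹) / (1 + b * s⁻¹) ^ 2) atTop (nhds 1) := by
    have := hnum.div hden one_ne_zero; rw [div_one] at this; exact this
  apply h1.congr'
  filter_upwards [eventually_gt_atTop 0] with s hs
  have h2 : s + b ≠ 0 := by positivity
  field_simp

lemma log_x_div_x : Tendsto (fun x : ℝ => Real.log x / x) atTop (nhds 0) := by
  have := Real.tendsto_pow_log_div_mul_add_atTop 1 0 1 one_ne_zero
  simpa using this

lemma log_term (a : ℝ) (ha : 0 ≤ a) :
    Tendsto (fun s : ℝ => s * Real.log (s + a) / (s + 3) ^ 2) atTop (nhds 0) := by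
  have h1 : Tendsto (fun s : ℝ => Real.log (s + a) / (s + a)) atTop (nhds 0) :=
    log_x_div_x.comp (tendsto_atTop_add_const_right atTop a tendsto_id)
  have h2 := aux_rat a 3 ha (by norm_num)
  have h3 := h1.mul h2
  rw [zero_mul] at h3
  apply h3.congr'
  filter_upwards [eventually_gt_atTop 0] with s hs
  have h4 : s + a ≠ 0 := by positivity
  have h5 : s + 3 ≠ 0 := by positivity
  field_simp

lemma s_div_sq : Tendsto (fun s : ℝ => s / (s + 3) ^ 2) atTop (nhds 0) := by
  have h1 := aux_rat 3 3 (by norm_num) (by norm_num)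
  have h2 : Tendsto (fun s : ℝ => (s + 3)⁻¹) atTop (nhds 0) :=
    tendsto_inv_atTop_zero.comp (tendsto_atTop_add_const_right atTop 3 tendsto_id)
  have h3 := h1.mul h2
  rw [mul_zero] at h3
  apply h3.congr'
  filter_upwards [eventually_gt_atTop 0] with s hs
  have h5 : s + 3 ≠ 0 := by positivity
  field_simp

lemma s_div_s3 : Tendsto (fun s : ℝ => s / (s + 3)) atTop (nhds 1) := by
  have h1 := aux_rat 3 3 (by norm_num) (by norm_num)
  apply h1.congr'
  filter_upwards [eventually_gt_atTop 0] with s hs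
  have h5 : s + 3 ≠ 0 := by positivity
  field_simp

lemma low_tendsto :
    Tendsto (fun s : ℝ => s * (2 * (s+1) / (1 + (s+1)) ^ 2
      - 2 * ((Real.log (s+1) - Real.log 2 + Real.log (1 + (s+1))) / (2 + (s+1)) ^ 2
          + (1 / (2 + (s+1))) * (1 / 2 - (1 + (s+1))⁻¹)))) atTop (nhds 1) := by
  have hA : Tendsto (fun s : ℝ => 2 * (s * (s+1) / (s+2)^2)) atTop (nhds (2*1)) :=
    (aux_rat 1 2 (by norm_num) (by norm_num)).const_mul 2
  have hB1 : Tendsto (fun s : ℝ => 2 * (s * Real.log (s+1) / (s+3)^2)) atTop (nhds (2*0)) :=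
    (log_term 1 (by norm_num)).const_mul 2
  have hB2 : Tendsto (fun s : ℝ => 2 * (s * Real.log (s+2) / (s+3)^2)) atTop (nhds (2*0)) :=
    (log_term 2 (by norm_num)).const_mul 2
  have hB3 : Tendsto (fun s : ℝ => (2 * Real.log 2) * (s / (s+3)^2)) atTop
      (nhds ((2 * Real.log 2) * 0)) := s_div_sq.const_mul _
  have hC2 : Tendsto (fun s : ℝ => (s+2)⁻¹) atTop (nhds 0) :=
    tendsto_inv_atTop_zero.comp (tendsto_atTop_add_const_right atTop 2 tendsto_id)
  have hC : Tendsto (fun s : ℝ => 2 * (s / (s+3)) * (1/2 - (s+2)⁻¹)) atTop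
      (nhds (2 * 1 * (1/2 - 0))) := (s_div_s3.const_mul 2).mul (tendsto_const_nhds.sub hC2)
  have hsum := ((((hA.sub hB1).sub hB2).add hB3).sub hC)
  have heq : (fun s : ℝ => s * (2 * (s+1) / (1 + (s+1)) ^ 2
      - 2 * ((Real.log (s+1) - Real.log 2 + Real.log (1 + (s+1))) / (2 + (s+1)) ^ 2
          + (1 / (2 + (s+1))) * (1 / 2 - (1 + (s+1))⁻¹))))
      = fun s : ℝ => 2 * (s * (s+1) / (s+2)^2) - 2 * (s * Real.log (s+1) / (s+3)^2)
          - 2 * (s * Real.log (s+2) / (s+3)^2) + (2 * Real.log 2) * (s / (s+3)^2)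
          - 2 * (s / (s+3)) * (1/2 - (s+2)⁻¹) := by
    funext s
    rw [show (1:ℝ) + (s+1) = s+2 by ring, show (2:ℝ) + (s+1) = s+3 by ring]
    ring
  rw [heq]
  convert hsum using 2
  norm_num

lemma up_tendsto : Tendsto (fun s : ℝ => s * (1+s)⁻¹) atTop (nhds 1) := by
  apply (aux_rat 1 1 (by norm_num) (by norm_num)).congr'
  filter_upwards [eventually_gt_atTop 0] with s hs
  have : s + 1 ≠ 0 := by positivity
  field_simp
  ring

lemma cesaro (φ : ℝ → ℝ) (hc : ContinuousOn φ (Ici 0))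
    (h01 : ∀ s, 0 ≤ s → 0 ≤ φ s ∧ φ s ≤ 1)
    (hlim : Tendsto φ atTop (nhds 1)) :
    Tendsto (fun t => (∫ u in (0:ℝ)..t, φ u) / t) atTop (nhds 1) := by
  have hint : ∀ a b : ℝ, 0 ≤ a → a ≤ b → IntervalIntegrable φ volume a b := by
    intro a b ha hab
    apply ContinuousOn.intervalIntegrable
    apply hc.mono
    rw [uIcc_of_le hab]
    exact fun x hx => le_trans ha hx.1
  rw [Metric.tendsto_nhds]
  intro ε hε
  obtain ⟨T0, hT0⟩ := eventually_atTop.1 (Metric.tendsto_nhds.1 hlim (ε/2) (by linarith))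
  set T := max T0 0 with hTdef
  have hT : 0 ≤ T := le_max_right _ _
  filter_upwards [eventually_gt_atTop (max T (2 * T / ε))] with t htmax
  have htT : T < t := lt_of_le_of_lt (le_max_left _ _) htmax
  have ht2 : 2 * T / ε < t := lt_of_le_of_lt (le_max_right _ _) htmax
  have ht0 : 0 < t := lt_of_le_of_lt hT htT
  have hεt : 2 * T < ε * t := by
    rw [div_lt_iff₀ hε] at ht2
    linarith
  -- upper: ∫ ≤ t
  have hup : (∫ u in (0:ℝ)..t, φ u) ≤ t := by
    calc (∫ u in (0:ℝ)..t, φ u) ≤ ∫ _ in (0:ℝ)..t, (1:ℝ) := by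
          apply intervalIntegral.integral_mono_on ht0.le (hint 0 t le_rfl ht0.le)
            intervalIntegrable_const
          exact fun x hx => (h01 x hx.1).2
      _ = t := by simp
  -- lower
  have hlow : (1 - ε/2) * (t - T) ≤ ∫ u in (0:ℝ)..t, φ u := by
    have hsplit : (∫ u in (0:ℝ)..t, φ u)
        = (∫ u in (0:ℝ)..T, φ u) + ∫ u in T..t, φ u := by
      rw [intervalIntegral.integral_add_adjacent_intervals (hint 0 T le_rfl hT)
        (hint T t hT htT.le)]
    have h1 : (0:ℝ) ≤ ∫ u in (0:ℝ)..T, φ u :=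
      intervalIntegral.integral_nonneg hT (fun u hu => (h01 u hu.1).1)
    have h2 : (1 - ε/2) * (t - T) ≤ ∫ u in T..t, φ u := by
      have : (∫ _ in T..t, (1 - ε/2)) ≤ ∫ u in T..t, φ u := by
        apply intervalIntegral.integral_mono_on htT.le intervalIntegrable_const
          (hint T t hT htT.le)
        intro x hx
        have := hT0 x (le_trans (le_max_left _ _) hx.1)
        rw [Real.dist_eq, abs_lt] at this
        linarith [this.1]
      rw [intervalIntegral.integral_const, smul_eq_mul, mul_comm] at this
      exact this
    linarith
  rw [Real.dist_eq, abs_lt]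
  constructor
  · have h3 : (1 - ε/2) * (t - T) / t ≤ (∫ u in (0:ℝ)..t, φ u) / t := by
      exact (div_le_div_iff_of_pos_right ht0).2 hlow
    have h4 : 1 - ε < (1 - ε/2) * (t - T) / t := by
      rw [lt_div_iff₀ ht0]
      nlinarith [hT, hεt, ht0.le]
    linarith
  · have : (∫ u in (0:ℝ)..t, φ u) / t ≤ 1 := by
      rw [div_le_one ht0]
      exact hup
    linarith


/-- For the CDF `F` solving the renewal equation,
`∫₀ᵗ u (1 - F(u)) du ~ t` as `t → ∞`. -/
theorem integral_t_one_sub_F_asymptotic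
    (F F' : ℝ → ℝ)
    (hmono : ∀ a b : ℝ, 0 ≤ a → a ≤ b → F a ≤ F b)
    (hzero : F 0 = 0)
    (hlim : Filter.Tendsto F atTop (nhds 1))
    (hderiv : ∀ t, 0 ≤ t → HasDerivWithinAt F (F' t) (Ici 0) t)
    (hcont : ContinuousOn F' (Ici 0))
    (hrenewal : ∀ t, 0 ≤ t →
      F t = 2 * t / (1 + t) ^ 3 + ∫ y in (0:ℝ)..t, 2 / (1 + (t - y)) ^ 3 * F y) :
    Filter.Tendsto
      (fun t : ℝ => (∫ u in (0:ℝ)..t, u * (1 - F u)) / t)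
      atTop (nhds 1) := by
  have hFc : ContinuousOn F (Ici 0) := fun t ht => (hderiv t ht).continuousWithinAt
  have hle1 : ∀ y, 0 ≤ y → F y ≤ 1 := fun y hy =>
    ge_of_tendsto hlim (eventually_atTop.2 ⟨y, fun x hx => hmono y x hy hx⟩)
  have hstar := star F hFc hrenewal
  have hupper := upper_bound F hFc hmono hstar
  have hF0 : (0:ℝ) ≤ F 0 := le_of_eq hzero.symm
  have hlower := lower_bound F hFc hmono hF0 hupper hstar
  set φ : ℝ → ℝ := fun u => u * (1 - F u) with hφdef
  have hφc : ContinuousOn φ (Ici 0) :=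
    continuousOn_id.mul (continuousOn_const.sub hFc)
  have hφ01 : ∀ s, 0 ≤ s → 0 ≤ φ s ∧ φ s ≤ 1 := by
    intro s hs
    constructor
    · exact mul_nonneg hs (by linarith [hle1 s hs])
    · rcases eq_or_lt_of_le hs with h | h
      · simp [hφdef, ← h]
      · have h1 := hupper s h
        have h2 : (0:ℝ) < 1 + s := by linarith
        have h3 : s * (1 - F s) ≤ s * (1 + s)⁻¹ :=
          mul_le_mul_of_nonneg_left h1 hs
        have h4 : s * (1 + s)⁻¹ ≤ 1 := by
          rw [← one_div, mul_one_div, div_le_one h2]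
          linarith
        exact le_trans h3 h4
  have hφlim : Tendsto φ atTop (nhds 1) := by
    apply tendsto_of_tendsto_of_tendsto_of_le_of_le' low_tendsto up_tendsto
    · filter_upwards [eventually_ge_atTop 0] with s hs
      have := hlower (s + 1) (by linarith)
      rw [show s + 1 - 1 = s by ring] at this
      exact mul_le_mul_of_nonneg_left this hs
    · filter_upwards [eventually_gt_atTop 0] with s hs
      exact mul_le_mul_of_nonneg_left (hupper s hs) hs.le
  exact cesaro φ hφc hφ01 hφlim
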